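/- Let ρ = Σ_k p_k |e_k⟩⟨e_k| ⊗ |f_k⟩⟨f_k| be a separable bipartite state. Then Σ_k p_k [ (ΔA)²_{|e_k⟩} + (ΔB)²_{|f_k⟩} ] ≤ Δ(A⊗I − I⊗B)²_ρ for any Hermitian observables A on H_A and B on H_B. -/

import Mathlib

open Matrix Kronecker

noncomputable def varM {n : Type*} [Fintype n] (ρ A : Matrix n n ℂ) : ℝ :=
  ((ρ * A * A).trace).re - (((ρ * A).trace).re) ^ 2

noncomputable def varV {n : Type*} [Fintype n] (ψ : n → ℂ) (A : Matrix n n ℂ) : ℝ :=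
  (star ψ ⬝ᵥ (A * A).mulVec ψ).re - ((star ψ ⬝ᵥ A.mulVec ψ).re) ^ 2

def prodVec {a b : Type*} (e : a → ℂ) (f : b → ℂ) : a × b → ℂ := fun x => e x.1 * f x.2

lemma dot_prod2 {a b : Type*} [Fintype a] [Fintype b] (u x : a → ℂ) (v y : b → ℂ) :
    star (prodVec u v) ⬝ᵥ prodVec x y = (star u ⬝ᵥ x) * (star v ⬝ᵥ y) := by
  simp only [dotProduct, Fintype.sum_prod_type, prodVec, Pi.star_apply, star_mul',
    Finset.sum_mul, Finset.mul_sum]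
  rw [Finset.sum_comm]
  refine Finset.sum_congr rfl fun i _ => Finset.sum_congr rfl fun j _ => by ring

lemma kron_mulVec {a b : Type*} [Fintype a] [Fintype b] (X : Matrix a a ℂ) (Y : Matrix b b ℂ)
    (u : a → ℂ) (v : b → ℂ) :
    (X ⊗ₖ Y).mulVec (prodVec u v) = prodVec (X.mulVec u) (Y.mulVec v) := by
  ext ⟨i,j⟩
  simp only [mulVec, dotProduct, Fintype.sum_prod_type, prodVec, kroneckerMap_apply,
    Finset.sum_mul, Finset.mul_sum]
  rw [Finset.sum_comm]
  refine Finset.sum_congr rfl fun k _ => Finset.sum_congr rfl fun l _ => by ring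

lemma herm_real {n : Type*} [Fintype n] {A : Matrix n n ℂ} (hA : A.IsHermitian) (x : n → ℂ) :
    (star x ⬝ᵥ A.mulVec x).im = 0 := by
  apply Complex.conj_eq_iff_im.mp
  simp only [dotProduct, mulVec, Pi.star_apply, map_sum, _root_.map_mul, Complex.conj_conj,
    Finset.mul_sum, Finset.sum_mul]
  rw [Finset.sum_comm]
  refine Finset.sum_congr rfl fun i _ => Finset.sum_congr rfl fun j _ => ?_
  have h2 : (starRingEnd ℂ) (A j i) = A i j := by
    have := congrFun (congrFun hA.eq i) j
    simpa [conjTranspose_apply] using this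
  rw [h2]
  simp only [RCLike.star_def, Complex.conj_conj]
  ring

lemma trace_vecMulVec_mul {n : Type*} [Fintype n] (u v : n → ℂ) (X : Matrix n n ℂ) :
    (vecMulVec u v * X).trace = v ⬝ᵥ X.mulVec u := by
  simp only [trace, diag, mul_apply, vecMulVec_apply, dotProduct, mulVec]
  rw [Finset.sum_comm]
  refine Finset.sum_congr rfl fun i _ => ?_
  simp only [Finset.mul_sum]
  refine Finset.sum_congr rfl fun j _ => by ring

lemma jensen_sq {M : ℕ} (p : Fin M → ℝ) (hp : ∀ k, 0 ≤ p k) (hp1 : ∑ k, p k = 1)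
    (x : Fin M → ℝ) : (∑ k, p k * x k) ^ 2 ≤ ∑ k, p k * (x k) ^ 2 := by
  set m := ∑ k, p k * x k with hm
  have h : 0 ≤ ∑ k, p k * (x k - m) ^ 2 :=
    Finset.sum_nonneg fun k _ => mul_nonneg (hp k) (sq_nonneg _)
  have expand : ∑ k, p k * (x k - m) ^ 2 = (∑ k, p k * (x k) ^ 2) - m ^ 2 := by
    have h1 : ∀ k, p k * (x k - m) ^ 2
        = p k * (x k) ^ 2 - 2 * m * (p k * x k) + m ^ 2 * p k := fun k => by ring
    rw [Finset.sum_congr rfl fun k _ => h1 k]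
    rw [Finset.sum_add_distrib, Finset.sum_sub_distrib, ← Finset.mul_sum, ← Finset.mul_sum,
      hp1, ← hm]
    ring
  linarith

/-- for a separable state `ρ = Σ_k p_k |e_k⟩⟨e_k| ⊗ |f_k⟩⟨f_k|`,
`Σ_k p_k [(ΔA)²_{e_k} + (ΔB)²_{f_k}] ≤ Δ(A⊗I − I⊗B)²_ρ`. -/
theorem separable_variance_bound {a b : Type*} [Fintype a] [Fintype b]
    [DecidableEq a] [DecidableEq b]
    {M : ℕ} (p : Fin M → ℝ) (hp : ∀ k, 0 ≤ p k) (hp1 : ∑ k, p k = 1)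
    (e : Fin M → a → ℂ) (f : Fin M → b → ℂ)
    (he : ∀ k, star (e k) ⬝ᵥ e k = 1) (hf : ∀ k, star (f k) ⬝ᵥ f k = 1)
    (ρ : Matrix (a × b) (a × b) ℂ)
    (hρ : ρ = ∑ k, (p k : ℂ) •
      vecMulVec (prodVec (e k) (f k)) (star (prodVec (e k) (f k))))
    (A : Matrix a a ℂ) (B : Matrix b b ℂ) (hA : A.IsHermitian) (hB : B.IsHermitian) :
    ∑ k, p k * (varV (e k) A + varV (f k) B) ≤
      varM ρ (A ⊗ₖ (1 : Matrix b b ℂ) - (1 : Matrix a a ℂ) ⊗ₖ B) := by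
  set C : Matrix (a × b) (a × b) ℂ := A ⊗ₖ (1 : Matrix b b ℂ) - (1 : Matrix a a ℂ) ⊗ₖ B with hC
  set ψ : Fin M → a × b → ℂ := fun k => prodVec (e k) (f k) with hψ
  -- C acting on product vectors
  have hCmv : ∀ (u : a → ℂ) (v : b → ℂ),
      C.mulVec (prodVec u v) = prodVec (A.mulVec u) v - prodVec u (B.mulVec v) := by
    intro u v
    rw [hC, sub_mulVec, kron_mulVec, kron_mulVec, one_mulVec, one_mulVec]
  -- trace formula
  have htr : ∀ X : Matrix (a × b) (a × b) ℂ,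
      (ρ * X).trace = ∑ k, (p k : ℂ) * (star (ψ k) ⬝ᵥ X.mulVec (ψ k)) := by
    intro X
    rw [hρ, Finset.sum_mul, trace_sum]
    refine Finset.sum_congr rfl fun k _ => ?_
    rw [smul_mul_assoc, trace_smul, trace_vecMulVec_mul]
    simp [smul_eq_mul]
    exact Or.inl rfl
  -- first moment
  have hC1 : ∀ k, star (ψ k) ⬝ᵥ C.mulVec (ψ k)
      = (star (e k) ⬝ᵥ A.mulVec (e k)) - (star (f k) ⬝ᵥ B.mulVec (f k)) := by
    intro k
    rw [hψ]
    simp only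
    rw [hCmv, dotProduct_sub, dot_prod2, dot_prod2, he, hf]
    ring
  -- second moment
  have hC2 : ∀ k, star (ψ k) ⬝ᵥ (C * C).mulVec (ψ k)
      = (star (e k) ⬝ᵥ (A * A).mulVec (e k)) + (star (f k) ⬝ᵥ (B * B).mulVec (f k))
        - 2 * (star (e k) ⬝ᵥ A.mulVec (e k)) * (star (f k) ⬝ᵥ B.mulVec (f k)) := by
    intro k
    rw [hψ]
    simp only
    rw [← mulVec_mulVec, hCmv, mulVec_sub, hCmv, hCmv,
      dotProduct_sub, dotProduct_sub, dotProduct_sub,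
      dot_prod2, dot_prod2, dot_prod2, he, hf, mulVec_mulVec, mulVec_mulVec]
    ring
  -- real expectation values
  set α : Fin M → ℝ := fun k => (star (e k) ⬝ᵥ A.mulVec (e k)).re with hα
  set β : Fin M → ℝ := fun k => (star (f k) ⬝ᵥ B.mulVec (f k)).re with hβ
  have him : ∀ k, (star (e k) ⬝ᵥ A.mulVec (e k)).im = 0 := fun k => herm_real hA _
  have him' : ∀ k, (star (f k) ⬝ᵥ B.mulVec (f k)).im = 0 := fun k => herm_real hB _
  -- real parts of traces
  have htr1 : ((ρ * C).trace).re = ∑ k, p k * (α k - β k) := by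
    rw [htr C]
    rw [Complex.re_sum]
    refine Finset.sum_congr rfl fun k _ => ?_
    rw [hC1 k]
    simp [Complex.mul_re, Complex.sub_re, hα, hβ]
  have htr2 : ((ρ * C * C).trace).re
      = ∑ k, p k * ((star (e k) ⬝ᵥ (A * A).mulVec (e k)).re
          + (star (f k) ⬝ᵥ (B * B).mulVec (f k)).re - 2 * α k * β k) := by
    rw [mul_assoc, htr (C * C), Complex.re_sum]
    refine Finset.sum_congr rfl fun k _ => ?_
    rw [hC2 k]
    simp only [Complex.mul_re, Complex.ofReal_re, Complex.ofReal_im, zero_mul, sub_zero,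
      Complex.sub_re, Complex.add_re, Complex.sub_im, Complex.add_im, Complex.mul_im]
    rw [him k, him' k]
    simp [hα, hβ]
  -- put everything together
  rw [varM, htr1, htr2]
  have hvar : ∀ k, varV (e k) A + varV (f k) B
      = ((star (e k) ⬝ᵥ (A * A).mulVec (e k)).re
          + (star (f k) ⬝ᵥ (B * B).mulVec (f k)).re - 2 * α k * β k)
        - (α k - β k) ^ 2 := by
    intro k
    rw [varV, varV, hα, hβ]
    ring
  calc ∑ k, p k * (varV (e k) A + varV (f k) B)
      = ∑ k, (p k * ((star (e k) ⬝ᵥ (A * A).mulVec (e k)).re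
          + (star (f k) ⬝ᵥ (B * B).mulVec (f k)).re - 2 * α k * β k)
          - p k * (α k - β k) ^ 2) := by
        refine Finset.sum_congr rfl fun k _ => ?_
        rw [hvar k]; ring
    _ = (∑ k, p k * ((star (e k) ⬝ᵥ (A * A).mulVec (e k)).re
          + (star (f k) ⬝ᵥ (B * B).mulVec (f k)).re - 2 * α k * β k))
          - ∑ k, p k * (α k - β k) ^ 2 := by
        rw [Finset.sum_sub_distrib]
    _ ≤ (∑ k, p k * ((star (e k) ⬝ᵥ (A * A).mulVec (e k)).re
          + (star (f k) ⬝ᵥ (B * B).mulVec (f k)).re - 2 * α k * β k))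
          - (∑ k, p k * (α k - β k)) ^ 2 := by
        have := jensen_sq p hp hp1 (fun k => α k - β k)
        linarith
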